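/- Let q ∈ (1/2, 1] and let σ be a density operator on ℂ²⊗ℂ²⊗ℂ² with ⟨GHZ|σ|GHZ⟩ ≥ q, where |GHZ⟩ = (|000⟩ + |111⟩)/√2. Then every eigenvalue λ of the reduced density operator σ_A = Tr_{BC} σ on the first qubit satisfies (1 − 2√(q(1−q)))/2 ≤ λ ≤ (1 + 2√(q(1−q)))/2. -/

import Mathlib

open scoped BigOperators ComplexOrder
open Matrix

noncomputable section

/-- The GHZ state `(|000⟩ + |111⟩)/√2` on `ℂ²⊗ℂ²⊗ℂ²`. -/
def ghz3 : Fin 2 × Fin 2 × Fin 2 → ℂ :=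
  fun p =>
    if p = (0, 0, 0) then ((Real.sqrt 2 : ℂ))⁻¹
    else if p = (1, 1, 1) then ((Real.sqrt 2 : ℂ))⁻¹ else 0

/-- The reduced density operator on the first qubit (partial trace over the second and
third tensor factors). -/
def redA (σ : Matrix (Fin 2 × Fin 2 × Fin 2) (Fin 2 × Fin 2 × Fin 2) ℂ) :
    Matrix (Fin 2) (Fin 2) ℂ :=
  fun x y => ∑ u : Fin 2 × Fin 2, σ (x, u.1, u.2) (y, u.1, u.2)

/-- `v ⊗ e_u`. -/
def wvec (v : Fin 2 → ℂ) (u : Fin 2 × Fin 2) : Fin 2 × Fin 2 × Fin 2 → ℂ :=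
  fun p => if p.2 = u then v p.1 else 0

/-- the vector orthogonal to `v`. -/
def uvc (v : Fin 2 → ℂ) : Fin 2 → ℂ :=
  ![-(starRingEnd ℂ (v 1)), starRingEnd ℂ (v 0)]

lemma aux_two_term_cs (c0 c1 : ℂ) (y0 y1 : EuclideanSpace ℂ (Fin 2 × Fin 2 × Fin 2)) :
    ‖c0 • y0 + c1 • y1‖^2 ≤ (‖c0‖^2 + ‖c1‖^2) * (‖y0‖^2 + ‖y1‖^2) := by
  have h := norm_add_le (c0 • y0) (c1 • y1)
  rw [norm_smul, norm_smul] at h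
  nlinarith [sq_nonneg (‖c0‖ * ‖y1‖ - ‖c1‖ * ‖y0‖), norm_nonneg (c0 • y0 + c1 • y1),
    norm_nonneg c0, norm_nonneg c1, norm_nonneg y0, norm_nonneg y1,
    mul_nonneg (norm_nonneg c0) (norm_nonneg y0), mul_nonneg (norm_nonneg c1) (norm_nonneg y1)]

lemma aux_wsum (σ : Matrix (Fin 2 × Fin 2 × Fin 2) (Fin 2 × Fin 2 × Fin 2) ℂ) (v : Fin 2 → ℂ) :
    ∑ u : Fin 2 × Fin 2, star (wvec v u) ⬝ᵥ σ.mulVec (wvec v u)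
      = star v ⬝ᵥ (redA σ).mulVec v := by
  simp only [wvec, dotProduct, Matrix.mulVec, redA, Fintype.sum_prod_type,
    Fin.sum_univ_two, Pi.star_apply, apply_ite (star : ℂ → ℂ), star_zero, Prod.mk.injEq]
  norm_num
  ring

lemma aux_trsum (σ : Matrix (Fin 2 × Fin 2 × Fin 2) (Fin 2 × Fin 2 × Fin 2) ℂ) (v : Fin 2 → ℂ) :
    ∑ u : Fin 2 × Fin 2,
        (star (wvec v u) ⬝ᵥ σ.mulVec (wvec v u)
          + star (wvec (uvc v) u) ⬝ᵥ σ.mulVec (wvec (uvc v) u))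
      = ((Complex.normSq (v 0) + Complex.normSq (v 1) : ℝ) : ℂ) * σ.trace := by
  simp only [wvec, uvc, dotProduct, Matrix.mulVec, Matrix.trace, Matrix.diag,
    Fintype.sum_prod_type, Fin.sum_univ_two, Pi.star_apply, apply_ite (star : ℂ → ℂ), star_zero,
    Prod.mk.injEq, Matrix.cons_val_zero, Matrix.cons_val_one, Matrix.head_cons, star_neg,
    RCLike.star_def, Complex.conj_conj, Complex.ofReal_add, Complex.normSq_eq_conj_mul_self]
  norm_num
  ring

lemma aux_ghz_decomp (v : Fin 2 → ℂ) (N : ℝ)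
    (hN : N = Complex.normSq (v 0) + Complex.normSq (v 1)) (hN0 : 0 < N) :
    ghz3 = ((Real.sqrt 2 : ℂ))⁻¹ • (N:ℂ)⁻¹ •
        (starRingEnd ℂ (v 0) • wvec v (0,0) + starRingEnd ℂ (v 1) • wvec v (1,1))
      + ((Real.sqrt 2 : ℂ))⁻¹ • (N:ℂ)⁻¹ •
        (starRingEnd ℂ (uvc v 0) • wvec (uvc v) (0,0)
          + starRingEnd ℂ (uvc v 1) • wvec (uvc v) (1,1)) := by
  have hNne : (N:ℂ) ≠ 0 := by exact_mod_cast hN0.ne'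
  have hNc : ((N:ℂ)) = starRingEnd ℂ (v 0) * v 0 + starRingEnd ℂ (v 1) * v 1 := by
    rw [hN]; push_cast [Complex.normSq_eq_conj_mul_self]; ring
  funext p
  obtain ⟨x, b, c⟩ := p
  fin_cases x <;> fin_cases b <;> fin_cases c <;>
    simp [ghz3, wvec, uvc, Prod.ext_iff, Complex.conj_conj] <;>
    field_simp <;> (try rw [hNc]) <;> ring

lemma aux_arith (q lam a b : ℝ) (hq1 : 1/2 < q) (hq2 : q ≤ 1)
    (ha0 : 0 ≤ a) (hb0 : 0 ≤ b) (ha2 : a^2 ≤ lam/2) (hb2 : b^2 ≤ (1-lam)/2)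
    (hq' : q ≤ (a+b)^2) :
    (1 - 2 * Real.sqrt (q * (1 - q))) / 2 ≤ lam ∧
      lam ≤ (1 + 2 * Real.sqrt (q * (1 - q))) / 2 := by
  have hlam0 : 0 ≤ lam := by nlinarith [sq_nonneg a]
  have hlam1 : lam ≤ 1 := by nlinarith [sq_nonneg b]
  have hs : Real.sqrt (lam * (1 - lam))^2 = lam * (1 - lam) :=
    Real.sq_sqrt (by nlinarith)
  have hab : a * b ≤ Real.sqrt (lam * (1 - lam)) / 2 := by
    have h1 : (a * b)^2 ≤ (Real.sqrt (lam * (1 - lam)) / 2)^2 := by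
      have h2 : a^2 * b^2 ≤ (lam/2) * ((1-lam)/2) :=
        mul_le_mul ha2 hb2 (sq_nonneg b) (by linarith)
      calc (a*b)^2 = a^2 * b^2 := by ring
        _ ≤ (lam/2)*((1-lam)/2) := h2
        _ = (Real.sqrt (lam*(1-lam))/2)^2 := by rw [div_pow, hs]; ring
    have h3 := Real.sqrt_le_sqrt h1
    rwa [Real.sqrt_sq (mul_nonneg ha0 hb0),
      Real.sqrt_sq (by positivity : (0:ℝ) ≤ Real.sqrt (lam * (1 - lam)) / 2)] at h3
  have hmain : q ≤ 1/2 + Real.sqrt (lam * (1 - lam)) := by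
    calc q ≤ (a+b)^2 := hq'
      _ = a^2 + b^2 + 2*(a*b) := by ring
      _ ≤ lam/2 + (1-lam)/2 + 2*(Real.sqrt (lam*(1-lam))/2) := by linarith
      _ = 1/2 + Real.sqrt (lam*(1-lam)) := by ring
  have hq12 : (q - 1/2)^2 ≤ lam * (1 - lam) := by
    nlinarith [Real.sqrt_nonneg (lam * (1 - lam))]
  have hlamsq : (lam - 1/2)^2 ≤ q * (1 - q) := by nlinarith
  have hT : |lam - 1/2| ≤ Real.sqrt (q * (1 - q)) := by
    have h := Real.sqrt_le_sqrt hlamsq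
    rwa [Real.sqrt_sq_eq_abs] at h
  rw [abs_le] at hT
  obtain ⟨hT1, hT2⟩ := hT
  constructor <;> linarith

set_option maxHeartbeats 1000000 in
/-- if a three-qubit density operator `σ` has fidelity at least
`q > 1/2` with the GHZ state, then every eigenvalue `λ` of the reduced state
`σ_A = Tr_{BC} σ` satisfies `(1-2√(q(1-q)))/2 ≤ λ ≤ (1+2√(q(1-q)))/2`. -/
theorem stmt_15 (q : ℝ) (hq : q ∈ Set.Ioc (1 / 2) 1)
    (σ : Matrix (Fin 2 × Fin 2 × Fin 2) (Fin 2 × Fin 2 × Fin 2) ℂ)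
    (hσpsd : σ.PosSemidef) (hσtr : σ.trace = 1)
    (hfid : (q : ℂ) ≤ star ghz3 ⬝ᵥ σ.mulVec ghz3) :
    ∀ (lam : ℝ) (v : Fin 2 → ℂ), v ≠ 0 → (redA σ).mulVec v = (lam : ℂ) • v →
      (1 - 2 * Real.sqrt (q * (1 - q))) / 2 ≤ lam ∧
      lam ≤ (1 + 2 * Real.sqrt (q * (1 - q))) / 2 := by
  intro lam v hv hev
  obtain ⟨hq1, hq2⟩ := hq
  obtain ⟨B, hB⟩ := (by open MatrixOrder in exact CStarAlgebra.nonneg_iff_eq_star_mul_self.mp hσpsd.nonneg :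
    ∃ B : Matrix (Fin 2 × Fin 2 × Fin 2) (Fin 2 × Fin 2 × Fin 2) ℂ, σ = Bᴴ * B)
  have quad_self : ∀ x : Fin 2 × Fin 2 × Fin 2 → ℂ,
      star x ⬝ᵥ σ.mulVec x
        = ((‖(WithLp.equiv 2 ((Fin 2 × Fin 2 × Fin 2) → ℂ)).symm (B.mulVec x)‖^2 : ℝ) : ℂ) := by
    intro x
    have h : star x ⬝ᵥ σ.mulVec x
        = inner ℂ ((WithLp.equiv 2 ((Fin 2 × Fin 2 × Fin 2) → ℂ)).symm (B.mulVec x))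
            ((WithLp.equiv 2 ((Fin 2 × Fin 2 × Fin 2) → ℂ)).symm (B.mulVec x)) := by
      rw [hB, ← Matrix.mulVec_mulVec, dotProduct_mulVec, ← Matrix.star_mulVec]
      rw [dotProduct_comm]
      exact (EuclideanSpace.inner_toLp_toLp (B.mulVec x) (B.mulVec x)).symm
    rw [h, inner_self_eq_norm_sq_to_K]
    norm_cast
  set f : (Fin 2 × Fin 2 × Fin 2 → ℂ) → EuclideanSpace ℂ (Fin 2 × Fin 2 × Fin 2) :=
    fun x => (WithLp.equiv 2 ((Fin 2 × Fin 2 × Fin 2) → ℂ)).symm (B.mulVec x) with hf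
  set N : ℝ := Complex.normSq (v 0) + Complex.normSq (v 1) with hN
  have hN0 : 0 < N := by
    have h01 : v 0 ≠ 0 ∨ v 1 ≠ 0 := by
      by_contra h
      push_neg at h
      exact hv (funext fun i => by fin_cases i <;> simp [h.1, h.2])
    rcases h01 with h | h
    · have h1 := Complex.normSq_pos.mpr h
      have h2 := Complex.normSq_nonneg (v 1)
      rw [hN]; linarith
    · have h1 := Complex.normSq_pos.mpr h
      have h2 := Complex.normSq_nonneg (v 0)
      rw [hN]; linarith
  have hNne' : N ≠ 0 := hN0.ne'
  -- eigenvalue equation as a quadratic form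
  have hvv : star v ⬝ᵥ v = (N : ℂ) := by
    simp only [dotProduct, Fin.sum_univ_two, Pi.star_apply, RCLike.star_def]
    rw [hN]
    push_cast [Complex.normSq_eq_conj_mul_self]
    ring
  have heig : star v ⬝ᵥ (redA σ).mulVec v = ((lam * N : ℝ) : ℂ) := by
    rw [hev, dotProduct_smul, hvv, smul_eq_mul]
    push_cast
    ring
  -- sums of squared norms
  have hA2 : ∑ u : Fin 2 × Fin 2, ‖f (wvec v u)‖^2 = lam * N := by
    have hc : ((lam * N : ℝ) : ℂ) = ∑ u : Fin 2 × Fin 2, ((‖f (wvec v u)‖^2 : ℝ) : ℂ) := by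
      rw [← heig, ← aux_wsum σ v]
      exact Finset.sum_congr rfl fun u _ => quad_self (wvec v u)
    exact_mod_cast hc.symm
  have hB2 : ∑ u : Fin 2 × Fin 2, ‖f (wvec (uvc v) u)‖^2 = (1 - lam) * N := by
    have h := aux_trsum σ v
    rw [hσtr, mul_one, ← hN] at h
    have hc : ((N : ℝ) : ℂ) = ∑ u : Fin 2 × Fin 2,
        (((‖f (wvec v u)‖^2 : ℝ) : ℂ) + ((‖f (wvec (uvc v) u)‖^2 : ℝ) : ℂ)) := by
      rw [← h]
      exact Finset.sum_congr rfl fun u _ => by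
        rw [quad_self (wvec v u), quad_self (wvec (uvc v) u)]
    have h' : (N : ℝ) = ∑ u : Fin 2 × Fin 2, (‖f (wvec v u)‖^2 + ‖f (wvec (uvc v) u)‖^2) := by
      exact_mod_cast hc
    rw [Finset.sum_add_distrib, hA2] at h'
    linarith
  -- two-term sums are bounded by the full sums
  have hwle : ‖f (wvec v (0,0))‖^2 + ‖f (wvec v (1,1))‖^2 ≤ lam * N := by
    rw [← hA2, Fintype.sum_prod_type, Fin.sum_univ_two, Fin.sum_univ_two, Fin.sum_univ_two]
    have h1 : (0:ℝ) ≤ ‖f (wvec v (0,1))‖^2 := sq_nonneg _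
    have h2 : (0:ℝ) ≤ ‖f (wvec v (1,0))‖^2 := sq_nonneg _
    linarith
  have hzle : ‖f (wvec (uvc v) (0,0))‖^2 + ‖f (wvec (uvc v) (1,1))‖^2 ≤ (1 - lam) * N := by
    rw [← hB2, Fintype.sum_prod_type, Fin.sum_univ_two, Fin.sum_univ_two, Fin.sum_univ_two]
    have h1 : (0:ℝ) ≤ ‖f (wvec (uvc v) (0,1))‖^2 := sq_nonneg _
    have h2 : (0:ℝ) ≤ ‖f (wvec (uvc v) (1,0))‖^2 := sq_nonneg _
    linarith
  -- the GHZ decomposition, mapped through f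
  set X1 : Fin 2 × Fin 2 × Fin 2 → ℂ := ((Real.sqrt 2 : ℂ))⁻¹ • (N:ℂ)⁻¹ •
      (starRingEnd ℂ (v 0) • wvec v (0,0) + starRingEnd ℂ (v 1) • wvec v (1,1)) with hX1
  set X2 : Fin 2 × Fin 2 × Fin 2 → ℂ := ((Real.sqrt 2 : ℂ))⁻¹ • (N:ℂ)⁻¹ •
      (starRingEnd ℂ (uvc v 0) • wvec (uvc v) (0,0)
        + starRingEnd ℂ (uvc v 1) • wvec (uvc v) (1,1)) with hX2
  have hghz : ghz3 = X1 + X2 := aux_ghz_decomp v N hN hN0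
  have hfX1 : f X1 = ((Real.sqrt 2 : ℂ))⁻¹ • (N:ℂ)⁻¹ •
      (starRingEnd ℂ (v 0) • f (wvec v (0,0)) + starRingEnd ℂ (v 1) • f (wvec v (1,1))) := by
    rw [hf]
    simp only [hX1, Matrix.mulVec_add, Matrix.mulVec_smul]
    rfl
  have hfX2 : f X2 = ((Real.sqrt 2 : ℂ))⁻¹ • (N:ℂ)⁻¹ •
      (starRingEnd ℂ (uvc v 0) • f (wvec (uvc v) (0,0))
        + starRingEnd ℂ (uvc v 1) • f (wvec (uvc v) (1,1))) := by
    rw [hf]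
    simp only [hX2, Matrix.mulVec_add, Matrix.mulVec_smul]
    rfl
  have hfadd : f ghz3 = f X1 + f X2 := by
    rw [hf, hghz]
    simp only [Matrix.mulVec_add]
    rfl
  -- norm bounds
  have hnormscal : ‖((Real.sqrt 2 : ℂ))⁻¹‖ = (Real.sqrt 2)⁻¹ := by
    rw [norm_inv]
    simp [Complex.norm_real, Real.sqrt_nonneg]
  have hnormN : ‖((N:ℝ) : ℂ)⁻¹‖ = N⁻¹ := by
    rw [norm_inv]
    simp [Complex.norm_real, abs_of_pos hN0]
  have hcoef : ‖starRingEnd ℂ (v 0)‖^2 + ‖starRingEnd ℂ (v 1)‖^2 = N := by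
    simp only [RCLike.norm_conj]
    rw [hN, ← Complex.sq_norm, ← Complex.sq_norm]
  have hcoef2 : ‖starRingEnd ℂ (uvc v 0)‖^2 + ‖starRingEnd ℂ (uvc v 1)‖^2 = N := by
    simp only [uvc, Matrix.cons_val_zero, Matrix.cons_val_one, Matrix.head_cons,
      RCLike.norm_conj, norm_neg]
    rw [hN, ← Complex.sq_norm, ← Complex.sq_norm]
    rw [add_comm]
  have hsq2 : ((Real.sqrt 2)⁻¹)^2 = 2⁻¹ := by
    rw [inv_pow, Real.sq_sqrt (by norm_num : (0:ℝ) ≤ 2)]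
  have hX1norm : ‖f X1‖^2 ≤ lam / 2 := by
    rw [hfX1, norm_smul, norm_smul, hnormscal, hnormN, mul_pow, mul_pow, hsq2]
    have hcs := aux_two_term_cs (starRingEnd ℂ (v 0)) (starRingEnd ℂ (v 1))
      (f (wvec v (0,0))) (f (wvec v (1,1)))
    rw [hcoef] at hcs
    have hb : N * (‖f (wvec v (0,0))‖^2 + ‖f (wvec v (1,1))‖^2) ≤ N * (lam * N) :=
      mul_le_mul_of_nonneg_left hwle hN0.le
    have hkey : ‖starRingEnd ℂ (v 0) • f (wvec v (0,0))
        + starRingEnd ℂ (v 1) • f (wvec v (1,1))‖^2 ≤ lam * N^2 := by nlinarith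
    have hmono : N⁻¹^2 * ‖starRingEnd ℂ (v 0) • f (wvec v (0,0))
        + starRingEnd ℂ (v 1) • f (wvec v (1,1))‖^2 ≤ N⁻¹^2 * (lam * N^2) :=
      mul_le_mul_of_nonneg_left hkey (by positivity)
    have hEq : N⁻¹^2 * (lam * N^2) = lam := by field_simp
    rw [hEq] at hmono
    linarith
  have hX2norm : ‖f X2‖^2 ≤ (1 - lam) / 2 := by
    rw [hfX2, norm_smul, norm_smul, hnormscal, hnormN, mul_pow, mul_pow, hsq2]
    have hcs := aux_two_term_cs (starRingEnd ℂ (uvc v 0)) (starRingEnd ℂ (uvc v 1))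
      (f (wvec (uvc v) (0,0))) (f (wvec (uvc v) (1,1)))
    rw [hcoef2] at hcs
    have hb : N * (‖f (wvec (uvc v) (0,0))‖^2 + ‖f (wvec (uvc v) (1,1))‖^2)
        ≤ N * ((1 - lam) * N) :=
      mul_le_mul_of_nonneg_left hzle hN0.le
    have hkey : ‖starRingEnd ℂ (uvc v 0) • f (wvec (uvc v) (0,0))
        + starRingEnd ℂ (uvc v 1) • f (wvec (uvc v) (1,1))‖^2 ≤ (1 - lam) * N^2 := by nlinarith
    have hmono : N⁻¹^2 * ‖starRingEnd ℂ (uvc v 0) • f (wvec (uvc v) (0,0))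
        + starRingEnd ℂ (uvc v 1) • f (wvec (uvc v) (1,1))‖^2 ≤ N⁻¹^2 * ((1 - lam) * N^2) :=
      mul_le_mul_of_nonneg_left hkey (by positivity)
    have hEq : N⁻¹^2 * ((1 - lam) * N^2) = 1 - lam := by field_simp
    rw [hEq] at hmono
    linarith
  -- fidelity lower bound
  have hqle : q ≤ ‖f ghz3‖^2 := by
    have h := hfid
    rw [quad_self ghz3] at h
    exact Complex.real_le_real.mp h
  -- assemble the real inequalities
  have htri : ‖f ghz3‖ ≤ ‖f X1‖ + ‖f X2‖ := by rw [hfadd]; exact norm_add_le _ _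
  have hq' : q ≤ (‖f X1‖ + ‖f X2‖)^2 :=
    hqle.trans (pow_le_pow_left₀ (norm_nonneg _) htri 2)
  exact aux_arith q lam ‖f X1‖ ‖f X2‖ hq1 hq2 (norm_nonneg _) (norm_nonneg _)
    hX1norm hX2norm hq'

end
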